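/- Let G be a simple graph with an interval representation assigning interval [l(z), r(z)] to each vertex z. Let u and v be non-adjacent vertices with r(u) < l(v), and let P = u x_1 x_2 ... x_r v be a path in G with no inner chords, where r >= 3. Then every vertex x_i with 2 <= i <= r-1 satisfies r(u) < l(x_i) and r(x_i) < l(v) (in particular, x_i is adjacent to neither u nor v, i.e., x_i does not belong to N[u] ∪ N[v]), and the vertices x_2,...,x_{r-1} all lie in the same connected component of the induced subgraph G - (N[u] ∪ N[v]). -/

import Mathlib

open SimpleGraph

variable {V : Type*}

/-- An interval representation of a simple graph: each vertex gets a closed real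
interval `[l u, r u]` with `l u < r u`, and two distinct vertices are adjacent
iff their intervals intersect. -/
structure IntervalRep (G : SimpleGraph V) where
  l : V → ℝ
  r : V → ℝ
  lt : ∀ u, l u < r u
  adj_iff : ∀ u v, u ≠ v →
    (G.Adj u v ↔ (Set.Icc (l u) (r u) ∩ Set.Icc (l v) (r v)).Nonempty)

/-- A path in `G` together with its two end-vertices. -/
structure IndexedPath (G : SimpleGraph V) where
  a : V
  b : V
  walk : G.Walk a b
  isPath : walk.IsPath

namespace IndexedPath

variable {G : SimpleGraph V}

/-- The set of end-vertices of the path. -/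
def ends (P : IndexedPath G) : Set V := {P.a, P.b}

/-- `v` is an inner vertex of `P`, i.e. a vertex of `P` other than its ends. -/
def IsInner (P : IndexedPath G) (v : V) : Prop :=
  v ∈ P.walk.support.tail.dropLast

/-- `P` has no inner chords: any edge between two of its vertices is either an
edge of the path itself or the edge between its two end-vertices. -/
def NoInnerChords (P : IndexedPath G) : Prop :=
  ∀ x y, x ∈ P.walk.support → y ∈ P.walk.support → G.Adj x y →
    s(x, y) ∈ P.walk.edges ∨ s(x, y) = s(P.a, P.b)

/-- `P` joins the vertices `x` and `y`. -/
def Joins (P : IndexedPath G) (x y : V) : Prop :=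
  (P.a = x ∧ P.b = y) ∨ (P.a = y ∧ P.b = x)

end IndexedPath

/-- A family of pairwise distinct paths is mutually induced if: (i) each path has
no inner chords; (ii) two distinct paths share only vertices that are ends of both;
(iii) no inner vertex of one path is adjacent to a vertex `v` of another path,
except when `v` is an end-vertex of both paths. -/
def MutuallyInduced {G : SimpleGraph V} {ι : Type*} (P : ι → IndexedPath G) : Prop :=
  (∀ i j, i ≠ j → P i ≠ P j) ∧
  (∀ i, (P i).NoInnerChords) ∧
  (∀ i j, i ≠ j → ∀ v, v ∈ (P i).walk.support → v ∈ (P j).walk.support →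
      v ∈ (P i).ends ∧ v ∈ (P j).ends) ∧
  (∀ i j, i ≠ j → ∀ u v, (P i).IsInner u → v ∈ (P j).walk.support → G.Adj u v →
      v ∈ (P i).ends ∧ v ∈ (P j).ends)

/-- The covered interval of a path: the union of the intervals of its inner vertices. -/
def coveredInterval {G : SimpleGraph V} (ρ : IntervalRep G) (P : IndexedPath G) : Set ℝ :=
  ⋃ v ∈ {w : V | P.IsInner w}, Set.Icc (ρ.l v) (ρ.r v)

/-- A solution to Requirement Induced Disjoint Paths: `l = r 1 + ... + r k`
mutually induced paths, exactly `r i` of which join `s i` and `t i`. -/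
def RIDPSolution {G : SimpleGraph V} (k : ℕ) (s t : Fin k → V) (r : Fin k → ℕ)
    {l : ℕ} (P : Fin l → IndexedPath G) : Prop :=
  l = ∑ i, r i ∧ MutuallyInduced P ∧
    ∀ i, Nat.card {j : Fin l // (P j).Joins (s i) (t i)} = r i

namespace Aux

variable {G : SimpleGraph V}

/-- negate an interval rep -/
def negRep (ρ : IntervalRep G) : IntervalRep G where
  l z := -ρ.r z
  r z := -ρ.l z
  lt z := by simpa using ρ.lt z
  adj_iff a b hab := by
    rw [ρ.adj_iff a b hab]
    constructor
    · rintro ⟨p, ⟨h1, h2⟩, h3, h4⟩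
      refine ⟨-p, ⟨?_, ?_⟩, ?_, ?_⟩ <;> linarith
    · rintro ⟨p, ⟨h1, h2⟩, h3, h4⟩
      refine ⟨-p, ⟨?_, ?_⟩, ?_, ?_⟩ <;> linarith

lemma disj_of_not_adj (ρ : IntervalRep G) {a b : V} (hab : a ≠ b) (h : ¬ G.Adj a b) :
    ρ.r b < ρ.l a ∨ ρ.r a < ρ.l b := by
  by_contra hc
  push_neg at hc
  exact h ((ρ.adj_iff a b hab).2 ⟨max (ρ.l a) (ρ.l b),
    ⟨le_max_left _ _, max_le (ρ.lt a).le hc.2⟩,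
    ⟨le_max_right _ _, max_le hc.1 (ρ.lt b).le⟩⟩)

lemma escL (ρ : IntervalRep G) {u v : V} (hlt : ρ.r u < ρ.l v) :
    ∀ (c : List V) (a : V), List.Chain' G.Adj (a :: (c ++ [v])) → ρ.r a < ρ.l u →
      (∀ z ∈ a :: c, ρ.r z < ρ.l u ∨ ρ.r u < ρ.l z) → False := by
  intro c
  induction c with
  | nil =>
    intro a hch ha _
    have hadj : G.Adj a v := (List.isChain_cons_cons.1 hch).1
    obtain ⟨p, ⟨_, h2⟩, h3, _⟩ := (ρ.adj_iff a v hadj.ne).1 hadj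
    have := ρ.lt u
    linarith
  | cons b c ih =>
    intro a hch ha hz
    have hadj : G.Adj a b := (List.isChain_cons_cons.1 hch).1
    obtain ⟨p, ⟨_, h2⟩, h3, _⟩ := (ρ.adj_iff a b hadj.ne).1 hadj
    have hb : ρ.r b < ρ.l u := by
      rcases hz b (by simp) with h | h
      · exact h
      · have := ρ.lt u; linarith
    exact ih b (List.isChain_cons_cons.1 hch).2 hb (fun z hzz => hz z (List.mem_cons_of_mem a hzz))

lemma first_edge {a b c : V} (w : G.Walk a b) (hp : w.IsPath)
    (h : s(a, c) ∈ w.edges) : w.support.tail.head? = some c := by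
  cases w with
  | nil => simp at h
  | cons hadj w' =>
    rw [SimpleGraph.Walk.edges_cons, List.mem_cons] at h
    rcases h with h | h
    · rcases Sym2.eq_iff.1 h with ⟨_, rfl⟩ | ⟨h1, _⟩
      · simp [SimpleGraph.Walk.support_cons,
          (List.head?_eq_head (SimpleGraph.Walk.support_ne_nil w')),
          SimpleGraph.Walk.head_support]
      · exact absurd h1 hadj.ne
    · have := SimpleGraph.Walk.fst_mem_support_of_mem_edges w' h
      rw [SimpleGraph.Walk.cons_isPath_iff] at hp
      exact absurd this hp.2

/-- main half lemma: every inner vertex except possibly the first has its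
interval strictly to the right of `u`'s interval. -/
lemma half (ρ : IntervalRep G) {u v : V} (hne : u ≠ v) (hnadj : ¬ G.Adj u v)
    (hlt : ρ.r u < ρ.l v) (w : G.Walk u v) (hp : w.IsPath)
    (hnc : ∀ x y, x ∈ w.support → y ∈ w.support → G.Adj x y →
      s(x, y) ∈ w.edges ∨ s(x, y) = s(u, v)) :
    ∀ y ∈ w.support.tail.dropLast.tail, ρ.r u < ρ.l y := by
  set s := w.support with hs
  have hnodup : s.Nodup := hp.support_nodup
  have hhead : s = u :: s.tail := by
    rw [hs]; exact w.support_eq_cons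
  have hglast : ∀ (h : s.tail ≠ []), s.tail.getLast h = v := by
    intro h
    rw [List.getLast_tail]
    exact w.getLast_support
  have hstail : ∀ (h : s.tail ≠ []), s.tail = s.tail.dropLast ++ [v] := by
    intro h
    conv_lhs => rw [← List.dropLast_concat_getLast h]
    rw [hglast h]
  -- v not in s.tail.dropLast
  have hvlast : ∀ z ∈ s.tail.dropLast, z ≠ v := by
    intro z hz
    have htne : s.tail ≠ [] := by
      intro h; rw [h] at hz; simp at hz
    have htnodup : s.tail.Nodup := by
      rw [hhead] at hnodup; exact hnodup.of_cons
    intro hzv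
    rw [hstail htne] at htnodup
    have := List.disjoint_of_nodup_append htnodup
    exact this hz (by simp [hzv])
  -- u not in s.tail
  have hu : ∀ z ∈ s.tail, z ≠ u := by
    intro z hz hzu
    rw [hhead] at hnodup
    exact (List.nodup_cons.1 hnodup).1 (hzu ▸ hz)
  -- non-adjacency to u for elements of s.tail.tail that aren't v
  have hnadj2 : ∀ z ∈ s.tail.tail, z ≠ v → ¬ G.Adj u z := by
    intro z hz hzv hadj
    have hzs : z ∈ s := by
      rw [hhead]; exact List.mem_cons.2 (Or.inr (List.mem_of_mem_tail hz))
    rcases hnc u z (by rw [hhead]; simp) hzs hadj with h | h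
    · have hfe := first_edge w hp h
      have htne : s.tail ≠ [] := by
        intro hh; rw [hh] at hz; simp at hz
      obtain ⟨a, t, hat⟩ := List.exists_cons_of_ne_nil htne
      have haz : a = z := by
        rw [← hs, hat] at hfe; simpa using hfe
      have htnodup : s.tail.Nodup := by rw [hhead] at hnodup; exact hnodup.of_cons
      rw [hat, List.nodup_cons] at htnodup
      rw [hat] at hz
      simp only [List.tail_cons] at hz
      exact htnodup.1 (by rw [haz]; exact hz)
    · rcases Sym2.eq_iff.1 h with ⟨_, h2⟩ | ⟨h1, _⟩
      · exact hzv h2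
      · exact hne h1
  -- now the main argument
  intro y hy
  -- decompose s.tail.dropLast.tail = p ++ y :: q
  obtain ⟨p, q, hpq⟩ := List.append_of_mem hy
  -- s.tail = head :: (s.tail.dropLast.tail) ++ [v]... build suffix chain
  have htne : s.tail.dropLast ≠ [] := by
    intro h
    rw [h] at hy; simp at hy
  have htne2 : s.tail ≠ [] := by
    intro h; rw [h] at htne; simp at htne
  have hst : s.tail = s.tail.dropLast ++ [v] := hstail htne2
  have hLd : s.tail.dropLast = s.tail.dropLast.head htne :: (p ++ y :: q) := by
    conv_lhs => rw [← List.cons_head_tail htne, hpq]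
  -- chain on support
  have hchain : List.Chain' G.Adj s := w.isChain_adj_support
  have hsfx : (y :: (q ++ [v])) <:+ s := by
    rw [hhead, hst, hLd]
    exact ⟨u :: (s.tail.dropLast.head htne :: p), by simp⟩
  have hchain2 : List.Chain' G.Adj (y :: (q ++ [v])) := List.IsChain.suffix hchain hsfx
  -- membership facts
  have hmem : ∀ z ∈ y :: q, z ∈ s.tail.dropLast.tail := by
    intro z hz
    rw [hpq]
    rcases List.mem_cons.1 hz with h | h
    · simp [h]
    · simp [List.mem_append.2 (Or.inr (List.mem_cons.2 (Or.inr h)))]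
  have hdisj : ∀ z ∈ y :: q, ρ.r z < ρ.l u ∨ ρ.r u < ρ.l z := by
    intro z hz
    have hz1 := hmem z hz
    have hz1' : z ∈ s.tail.tail.dropLast := by
      rw [← List.tail_dropLast]; exact hz1
    have hz2 : z ∈ s.tail.tail := List.dropLast_subset _ hz1'
    have hzv : z ≠ v := hvlast z (List.mem_of_mem_tail hz1)
    have hzu : z ≠ u := hu z (List.dropLast_subset _ (List.mem_of_mem_tail hz1))
    exact disj_of_not_adj ρ (Ne.symm hzu) (hnadj2 z hz2 hzv)
  rcases hdisj y (by simp) with h | h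
  · exact absurd (escL ρ hlt q y hchain2 h hdisj) (by simp)
  · exact h



lemma head_reach {s : Set V} : ∀ (c : List V) (a : V) (ha : a ∈ s),
    List.Chain' G.Adj (a :: c) → (∀ x ∈ c, x ∈ s) →
    ∀ z (hz : z ∈ s), z ∈ a :: c → (G.induce s).Reachable ⟨a, ha⟩ ⟨z, hz⟩ := by
  intro c
  induction c with
  | nil =>
    intro a ha _ _ z hz hmem
    simp at hmem
    subst hmem
    exact SimpleGraph.Reachable.refl _
  | cons b c ih =>
    intro a ha hch hmem z hz hzm
    rcases List.mem_cons.1 hzm with rfl | hzm'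
    · exact SimpleGraph.Reachable.refl _
    · have hb : b ∈ s := hmem b (by simp)
      have hadj : G.Adj a b := (List.isChain_cons_cons.1 hch).1
      have h1 : (G.induce s).Adj ⟨a, ha⟩ ⟨b, hb⟩ := hadj
      exact (h1.reachable).trans (ih b hb (List.isChain_cons_cons.1 hch).2
        (fun x hx => hmem x (by simp [hx])) z hz hzm')

lemma chain_reach {s : Set V} (c : List V) (hch : List.Chain' G.Adj c)
    (hmem : ∀ x ∈ c, x ∈ s) {y z : V} (hy : y ∈ s) (hz : z ∈ s)
    (hyc : y ∈ c) (hzc : z ∈ c) : (G.induce s).Reachable ⟨y, hy⟩ ⟨z, hz⟩ := by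
  obtain ⟨a, c', rfl⟩ := List.exists_cons_of_ne_nil (List.ne_nil_of_mem hyc)
  have ha : a ∈ s := hmem a (by simp)
  exact ((head_reach c' a ha hch (fun x hx => hmem x (by simp [hx])) y hy hyc).symm).trans
    (head_reach c' a ha hch (fun x hx => hmem x (by simp [hx])) z hz hzc)

end Aux

open Aux in
theorem statement9' {V : Type*} (G : SimpleGraph V) (ρ : IntervalRep G)
    (u v : V) (hne : u ≠ v) (hnadj : ¬ G.Adj u v) (hlt : ρ.r u < ρ.l v)
    (w : G.Walk u v) (hp : w.IsPath)
    (hnc : ∀ x y, x ∈ w.support → y ∈ w.support → G.Adj x y →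
      s(x, y) ∈ w.edges ∨ s(x, y) = s(u, v)) :
    (∀ y ∈ w.support.tail.dropLast.tail.dropLast,
        (ρ.r u < ρ.l y ∧ ρ.r y < ρ.l v) ∧
        y ∉ (insert u (G.neighborSet u) ∪ insert v (G.neighborSet v))) ∧
    (∀ y z : V,
        ∀ hy : y ∈ (insert u (G.neighborSet u) ∪ insert v (G.neighborSet v))ᶜ,
        ∀ hz : z ∈ (insert u (G.neighborSet u) ∪ insert v (G.neighborSet v))ᶜ,
        y ∈ w.support.tail.dropLast.tail.dropLast →
        z ∈ w.support.tail.dropLast.tail.dropLast →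
        (G.induce ((insert u (G.neighborSet u) ∪ insert v (G.neighborSet v))ᶜ)).Reachable
          ⟨y, hy⟩ ⟨z, hz⟩) := by
  -- mirror setup
  have hnc' : ∀ x y, x ∈ w.reverse.support → y ∈ w.reverse.support → G.Adj x y →
      s(x, y) ∈ w.reverse.edges ∨ s(x, y) = s(v, u) := by
    intro x z hx hz hadj
    rw [SimpleGraph.Walk.support_reverse, List.mem_reverse] at hx hz
    rcases hnc x z hx hz hadj with h | h
    · left; rw [SimpleGraph.Walk.edges_reverse, List.mem_reverse]; exact h
    · right; rw [h, Sym2.eq_swap]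
  have hlt' : (negRep ρ).r v < (negRep ρ).l u := by
    dsimp [negRep]; linarith
  have hlist : w.reverse.support.tail.dropLast.tail
      = (w.support.tail.dropLast.dropLast).reverse := by
    rw [SimpleGraph.Walk.support_reverse, List.tail_reverse, List.dropLast_reverse,
      List.tail_reverse, List.tail_dropLast]
  have key : ∀ y ∈ w.support.tail.dropLast.tail.dropLast,
      ρ.r u < ρ.l y ∧ ρ.r y < ρ.l v := by
    intro y hyM
    have hy1 : y ∈ w.support.tail.dropLast.tail := List.dropLast_subset _ hyM
    have h1 : ρ.r u < ρ.l y := half ρ hne hnadj hlt w hp hnc y hy1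
    have hy2 : y ∈ w.support.tail.dropLast.dropLast :=
      List.mem_of_mem_tail (by rw [List.tail_dropLast]; exact hyM)
    have hy3 : y ∈ w.reverse.support.tail.dropLast.tail := by
      rw [hlist]; exact List.mem_reverse.2 hy2
    have h2 := half (negRep ρ) hne.symm (fun h => hnadj h.symm) hlt'
      w.reverse hp.reverse hnc' y hy3
    dsimp [negRep] at h2
    exact ⟨h1, by linarith⟩
  have hnotS : ∀ y ∈ w.support.tail.dropLast.tail.dropLast,
      y ∉ (insert u (G.neighborSet u) ∪ insert v (G.neighborSet v)) := by
    intro y hy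
    obtain ⟨h1, h2⟩ := key y hy
    have hyu : y ≠ u := by
      intro h; subst h; exact absurd (ρ.lt y) (by linarith)
    have hyv : y ≠ v := by
      intro h; subst h; exact absurd (ρ.lt y) (by linarith)
    have hau : ¬ G.Adj u y := by
      intro h
      obtain ⟨p, ⟨_, hp2⟩, hp3, _⟩ := (ρ.adj_iff u y h.ne).1 h
      linarith
    have hav : ¬ G.Adj v y := by
      intro h
      obtain ⟨p, ⟨hp1, _⟩, _, hp4⟩ := (ρ.adj_iff v y h.ne).1 h
      linarith
    simp only [Set.mem_union, Set.mem_insert_iff, SimpleGraph.mem_neighborSet]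
    push_neg
    exact ⟨⟨hyu, hau⟩, hyv, hav⟩
  refine ⟨fun y hy => ⟨key y hy, hnotS y hy⟩, ?_⟩
  intro y z hy hz hyM hzM
  -- the inner-inner list is an infix of the support, hence a chain
  have hinf : w.support.tail.dropLast.tail.dropLast <:+: w.support := by
    refine List.IsInfix.trans ?_ (List.tail_suffix w.support).isInfix
    refine List.IsInfix.trans ?_ (List.dropLast_prefix w.support.tail).isInfix
    refine List.IsInfix.trans ?_ (List.tail_suffix w.support.tail.dropLast).isInfix
    exact (List.dropLast_prefix _).isInfix
  have hch : List.Chain' G.Adj w.support.tail.dropLast.tail.dropLast :=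
    (w.isChain_adj_support).infix hinf
  exact chain_reach _ hch (fun x hx => Set.mem_compl (hnotS x hx)) hy hz hyM hzM


/-- let `u, v` be non-adjacent vertices with `r u < l v` and let
`P = u x₁ ... x_r v` be a path with no inner chords, `r ≥ 3`. Then each `xᵢ` with
`2 ≤ i ≤ r-1` satisfies `r u < l xᵢ` and `r xᵢ < l v` (in particular it lies
outside `N[u] ∪ N[v]`), and all these vertices lie in the same connected component
of the subgraph induced on the complement of `N[u] ∪ N[v]`. -/
theorem statement9 {V : Type*} (G : SimpleGraph V) (ρ : IntervalRep G)
    (u v : V) (hne : u ≠ v) (hnadj : ¬ G.Adj u v) (hlt : ρ.r u < ρ.l v)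
    (P : IndexedPath G) (hPa : P.a = u) (hPb : P.b = v)
    (hnc : P.NoInnerChords)
    (r : ℕ) (hr : 3 ≤ r)
    (hlen : P.walk.support.tail.dropLast.length = r) :
    (∀ y ∈ P.walk.support.tail.dropLast.tail.dropLast,
        (ρ.r u < ρ.l y ∧ ρ.r y < ρ.l v) ∧
        y ∉ (insert u (G.neighborSet u) ∪ insert v (G.neighborSet v))) ∧
    (∀ y z : V,
        ∀ hy : y ∈ (insert u (G.neighborSet u) ∪ insert v (G.neighborSet v))ᶜ,
        ∀ hz : z ∈ (insert u (G.neighborSet u) ∪ insert v (G.neighborSet v))ᶜ,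
        y ∈ P.walk.support.tail.dropLast.tail.dropLast →
        z ∈ P.walk.support.tail.dropLast.tail.dropLast →
        (G.induce ((insert u (G.neighborSet u) ∪ insert v (G.neighborSet v))ᶜ)).Reachable
          ⟨y, hy⟩ ⟨z, hz⟩) := by
  subst hPa hPb
  exact statement9' G ρ P.a P.b hne hnadj hlt P.walk P.isPath hnc
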